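/- There exists a universal constant K > 0 with the following property. Let n ≥ 2, R ∈ ℕ, H ∈ [n], and 0 < δ ≤ 1/200. For each r ∈ [R], let I_r = (I_{r,1}, …, I_{r,n}) be a random vector with entries in {0,1}, and suppose the vectors I_1, …, I_R are mutually independent, with E[I_{r,H}] ≥ 1 − 3δ and E[I_{r,j}] ≤ 1/2 + 3δ for every r ∈ [R] and every j ≠ H. If R ≥ K log n, then with probability at least 1 − 1/n, for every j ≠ H one has ∑_{r=1}^R I_{r,H} > ∑_{r=1}^R I_{r,j}; in particular H is the unique maximizer of j ↦ #{r ∈ [R] : I_{r,j} = 1}. -/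

import Mathlib

open MeasureTheory ProbabilityTheory
open scoped ENNReal

lemma exp_le_one_add_add_sq {x : ℝ} (hx : |x| ≤ 1) : Real.exp x ≤ 1 + x + x ^ 2 := by
  have h := Real.exp_bound hx (n := 2) (by norm_num)
  have h2 : ∑ m ∈ Finset.range 2, x ^ m / m.factorial = 1 + x := by
    simp [Finset.sum_range_succ]
  rw [h2] at h
  have h3 := (abs_sub_le_iff.1 h).1
  norm_num [Nat.factorial] at h3
  nlinarith [sq_abs x]

lemma single_mgf_bound {Ω : Type} [MeasurableSpace Ω] (μ : Measure Ω) [IsProbabilityMeasure μ]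
    {Y : Ω → ℝ} (hYint : Integrable Y μ) (hexp : Integrable (fun ω => Real.exp (-(1/5) * Y ω)) μ)
    (hb : ∀ ω, |Y ω| ≤ 1) (hE : 2/5 ≤ ∫ ω, Y ω ∂μ) :
    mgf Y μ (-(1/5)) ≤ 24/25 := by
  have hpt : ∀ ω, Real.exp (-(1/5) * Y ω) ≤ 1 + -(1/5) * Y ω + 1/25 := by
    intro ω
    have hY := abs_le.1 (hb ω)
    have habs : |(-(1/5) : ℝ) * Y ω| ≤ 1 := by
      rw [abs_mul]
      have : |(-(1/5) : ℝ)| = 1/5 := by norm_num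
      rw [this]
      nlinarith [hb ω]
    have h := exp_le_one_add_add_sq habs
    have hsq1 : (Y ω) ^ 2 ≤ 1 := by nlinarith
    have hsq : ((-(1/5) : ℝ) * Y ω) ^ 2 ≤ 1/25 := by nlinarith
    linarith
  have h1 : Integrable (fun ω => -(1/5) * Y ω) μ := hYint.const_mul _
  have h2 : Integrable (fun ω => 1 + -(1/5) * Y ω) μ := (integrable_const 1).add h1
  have hrhs : Integrable (fun ω => 1 + -(1/5) * Y ω + 1/25) μ := h2.add (integrable_const _)
  have hI := integral_mono hexp hrhs hpt
  have heq : ∫ ω, (1 + -(1/5) * Y ω + 1/25) ∂μ = 1 + -(1/5) * (∫ ω, Y ω ∂μ) + 1/25 := by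
    rw [integral_add h2 (integrable_const _), integral_add (integrable_const 1) h1,
      integral_const, integral_const_mul]
    simp
  rw [heq] at hI
  have : -(1/5) * (∫ ω, Y ω ∂μ) ≤ -2/25 := by nlinarith
  calc mgf Y μ (-(1/5)) = ∫ ω, Real.exp (-(1/5) * Y ω) ∂μ := rfl
    _ ≤ 1 + -(1/5) * (∫ ω, Y ω ∂μ) + 1/25 := hI
    _ ≤ 24/25 := by linarith

/-- Chernoff-type bound for one competitor `j`. -/
lemma one_competitor {n : ℕ} {R : ℕ} (H : Fin n) {δ : ℝ}
    (hδ : δ ≤ 1/200) (Ω : Type) [MeasurableSpace Ω] (μ : Measure Ω) [IsProbabilityMeasure μ]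
    (I : Fin R → Ω → (Fin n → Bool)) (hMeas : ∀ r, Measurable (I r))
    (hIndep : iIndepFun I μ)
    (hHeavy : ∀ r, 1 - 3 * δ ≤ (μ {ω | I r ω H = true}).toReal)
    (hLight : ∀ r, ∀ j : Fin n, j ≠ H → (μ {ω | I r ω j = true}).toReal ≤ 1/2 + 3 * δ)
    (j : Fin n) (hj : j ≠ H) :
    μ {ω | ¬ ((∑ r, (if I r ω j = true then 1 else 0) : ℕ) <
          ∑ r, (if I r ω H = true then 1 else 0))} ≤ ENNReal.ofReal ((24/25 : ℝ)^R) := by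
  classical
  obtain ⟨X, hX⟩ : ∃ X : Fin R → Ω → ℝ, X = fun r ω =>
      ((if I r ω H = true then 1 else 0) - (if I r ω j = true then 1 else 0)) := ⟨_, rfl⟩
  have hsetm : ∀ (k : Fin n) (r : Fin R), MeasurableSet {ω | I r ω k = true} := by
    intro k r
    have hm : Measurable (fun ω => I r ω k) := (measurable_pi_apply k).comp (hMeas r)
    exact hm (measurableSet_singleton true)
  have hXmeas : ∀ r, Measurable (X r) := by
    intro r
    rw [hX]
    exact (Measurable.ite (hsetm H r) measurable_const measurable_const).sub
      (Measurable.ite (hsetm j r) measurable_const measurable_const)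
  have hgm : ∀ k : Fin n, MeasurableSet {v : Fin n → Bool | v k = true} := by
    intro k
    have hm : Measurable (fun v : Fin n → Bool => v k) := measurable_pi_apply k
    exact hm (measurableSet_singleton true)
  have hXindep : iIndepFun X μ := by
    have hg : ∀ r : Fin R, Measurable (fun v : Fin n → Bool =>
        ((if v H = true then 1 else 0) - (if v j = true then 1 else 0) : ℝ)) := by
      intro r
      exact (Measurable.ite (hgm H) measurable_const measurable_const).sub
        (Measurable.ite (hgm j) measurable_const measurable_const)
    rw [hX]
    exact hIndep.comp _ hg
  have hXbd : ∀ r ω, |X r ω| ≤ 1 := by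
    intro r ω
    rw [hX]
    dsimp only
    split_ifs <;> norm_num
  have hint_exp : ∀ r, Integrable (fun ω => Real.exp (-(1/5) * X r ω)) μ := by
    intro r
    refine (integrable_const (Real.exp 1)).mono'
      (((hXmeas r).const_mul _).exp.aestronglyMeasurable) (ae_of_all _ fun ω => ?_)
    rw [Real.norm_eq_abs, Real.abs_exp]
    refine Real.exp_le_exp.2 ?_
    have h := abs_le.1 (hXbd r ω)
    nlinarith [h.1, h.2]
  have hXint : ∀ r, Integrable (X r) μ := by
    intro r
    refine (integrable_const (1:ℝ)).mono' (hXmeas r).aestronglyMeasurable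
      (ae_of_all _ fun ω => ?_)
    rw [Real.norm_eq_abs]; exact hXbd r ω
  have hEX : ∀ r, 2/5 ≤ ∫ ω, X r ω ∂μ := by
    intro r
    have eH : (fun ω => if I r ω H = true then (1:ℝ) else 0) =
        Set.indicator {ω | I r ω H = true} (fun _ => (1:ℝ)) := by
      ext ω; simp [Set.indicator_apply, Set.mem_setOf_eq]
    have ej : (fun ω => if I r ω j = true then (1:ℝ) else 0) =
        Set.indicator {ω | I r ω j = true} (fun _ => (1:ℝ)) := by
      ext ω; simp [Set.indicator_apply, Set.mem_setOf_eq]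
    have iH : Integrable (fun ω => if I r ω H = true then (1:ℝ) else 0) μ := by
      rw [eH]; exact (integrable_const (1:ℝ)).indicator (hsetm H r)
    have ij : Integrable (fun ω => if I r ω j = true then (1:ℝ) else 0) μ := by
      rw [ej]; exact (integrable_const (1:ℝ)).indicator (hsetm j r)
    have hcalc : ∫ ω, X r ω ∂μ = (μ {ω | I r ω H = true}).toReal -
        (μ {ω | I r ω j = true}).toReal := by
      rw [hX]
      dsimp only
      rw [integral_sub iH ij, eH, ej,
        integral_indicator_const _ (hsetm H r), integral_indicator_const _ (hsetm j r)]
      simp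
      rfl
    rw [hcalc]
    have h1 := hHeavy r
    have h2 := hLight r j hj
    linarith
  have hmgf : ∀ r, mgf (X r) μ (-(1/5)) ≤ 24/25 := fun r =>
    single_mgf_bound μ (hXint r) (hint_exp r) (hXbd r) (hEX r)
  have hSint : Integrable (fun ω => Real.exp ((-(1/5)) * (∑ r, X r) ω)) μ :=
    hXindep.integrable_exp_mul_sum hXmeas (fun r _ => hint_exp r)
  have hch := measure_le_le_exp_mul_mgf (μ := μ) (X := ∑ r, X r) (t := -(1/5)) 0
    (by norm_num) hSint
  rw [mul_zero, Real.exp_zero, one_mul] at hch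
  have hprod : mgf (∑ r, X r) μ (-(1/5)) ≤ (24/25 : ℝ)^R := by
    rw [hXindep.mgf_sum hXmeas Finset.univ]
    calc ∏ r : Fin R, mgf (X r) μ (-(1/5)) ≤ ∏ _r : Fin R, (24/25 : ℝ) :=
          Finset.prod_le_prod (fun r _ => mgf_nonneg) (fun r _ => hmgf r)
      _ = (24/25 : ℝ)^R := by simp [div_pow]
  have hmain : (μ {ω | (∑ r, X r) ω ≤ 0}).toReal ≤ (24/25 : ℝ)^R := le_trans hch hprod
  have hsub : {ω | ¬ ((∑ r, (if I r ω j = true then 1 else 0) : ℕ) <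
      ∑ r, (if I r ω H = true then 1 else 0))} ⊆ {ω | (∑ r, X r) ω ≤ 0} := by
    intro ω hω
    simp only [Set.mem_setOf_eq, not_lt] at hω ⊢
    have hval : (∑ r, X r) ω =
        ((∑ r, (if I r ω H = true then 1 else 0) : ℕ) : ℝ) -
        ((∑ r, (if I r ω j = true then 1 else 0) : ℕ) : ℝ) := by
      rw [Finset.sum_apply, hX]
      push_cast [apply_ite (fun m : ℕ => (m : ℝ))]
      rw [← Finset.sum_sub_distrib]
    rw [hval, sub_nonpos]
    exact_mod_cast hω
  refine le_trans (measure_mono hsub) ?_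
  rw [ENNReal.le_ofReal_iff_toReal_le (measure_ne_top μ _) (by positivity)]
  exact hmain

/-- **Probabilistic core of Sieve/Selector correctness.** There is a universal `K > 0`
such that: if in each of `R ≥ K log n` mutually independent rounds, a `{0,1}`-vector
`I_r` is drawn with `E[I_{r,H}] ≥ 1 − 3δ` and `E[I_{r,j}] ≤ 1/2 + 3δ` for `j ≠ H`
(`0 < δ ≤ 1/200`), then with probability at least `1 − 1/n` the heavy item `H` wins
strictly more rounds than every other item. -/
theorem sieve_selector_core :
    ∃ K : ℝ, 0 < K ∧
      ∀ (n : ℕ), 2 ≤ n →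
      ∀ (R : ℕ) (H : Fin n) (δ : ℝ), 0 < δ → δ ≤ 1/200 →
      ∀ (Ω : Type) [MeasurableSpace Ω] (μ : Measure Ω) [IsProbabilityMeasure μ]
        (I : Fin R → Ω → (Fin n → Bool)),
        (∀ r, Measurable (I r)) →
        iIndepFun I μ →
        (∀ r, 1 - 3 * δ ≤ (μ {ω | I r ω H = true}).toReal) →
        (∀ r, ∀ j : Fin n, j ≠ H → (μ {ω | I r ω j = true}).toReal ≤ 1/2 + 3 * δ) →
        K * Real.log n ≤ (R : ℝ) →
        ENNReal.ofReal (1 - 1/(n : ℝ)) ≤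
          μ {ω | ∀ j : Fin n, j ≠ H →
              (∑ r, (if I r ω j = true then 1 else 0) : ℕ) <
                ∑ r, (if I r ω H = true then 1 else 0)} := by
  classical
  refine ⟨50, by norm_num, ?_⟩
  intro n hn R H δ hδ0 hδ Ω _ μ _ I hMeas hIndep hHeavy hLight hR
  have hn0 : (0:ℝ) < n := by positivity
  have hn0' : (0:ℝ) < n := by
    have : (2:ℝ) ≤ n := by exact_mod_cast hn
    linarith
  -- real-number estimate
  have hreal : ((n - 1 : ℕ) : ℝ) * (24/25 : ℝ)^R ≤ 1/n := by
    have hq : (24/25 : ℝ) ≤ Real.exp (-(1/25)) := by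
      have := Real.add_one_le_exp (-(1/25 : ℝ))
      linarith
    have h1 : (24/25 : ℝ)^R ≤ Real.exp (-(1/25))^R :=
      pow_le_pow_left₀ (by norm_num) hq R
    have h2 : Real.exp (-(1/25))^R = Real.exp (-(R/25 : ℝ)) := by
      rw [← Real.exp_nat_mul]; ring_nf
    have hlog : 0 ≤ Real.log n := Real.log_nonneg (by
      have : (2:ℝ) ≤ n := by exact_mod_cast hn
      linarith)
    have h3 : Real.exp (-(R/25 : ℝ)) ≤ Real.exp (-(2 * Real.log n)) := by
      apply Real.exp_le_exp.2
      have : 50 * Real.log n ≤ (R:ℝ) := hR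
      linarith
    have hexplog : Real.exp (Real.log n) = n := Real.exp_log hn0'
    have h4 : Real.exp (-(2 * Real.log n)) = 1/(n:ℝ)^2 := by
      rw [show -(2 * Real.log n) = -(Real.log n + Real.log n) by ring, Real.exp_neg,
        Real.exp_add, hexplog]
      rw [sq]
      norm_num
    have h5 : ((n - 1 : ℕ) : ℝ) ≤ n := by
      have : (n - 1 : ℕ) ≤ n := Nat.sub_le n 1
      exact_mod_cast this
    have hqR0 : (0:ℝ) ≤ (24/25 : ℝ)^R := by positivity
    have hpow : (24/25:ℝ)^R ≤ 1/(n:ℝ)^2 := by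
      calc (24/25:ℝ)^R ≤ Real.exp (-(1/25))^R := h1
        _ = Real.exp (-(R/25 : ℝ)) := h2
        _ ≤ Real.exp (-(2 * Real.log n)) := h3
        _ = 1/(n:ℝ)^2 := h4
    calc ((n - 1 : ℕ) : ℝ) * (24/25 : ℝ)^R ≤ (n:ℝ) * (1/(n:ℝ)^2) :=
          mul_le_mul h5 hpow hqR0 hn0'.le
      _ = 1/n := by field_simp
  set G : Set Ω := {ω | ∀ j : Fin n, j ≠ H →
      (∑ r, (if I r ω j = true then 1 else 0) : ℕ) <
        ∑ r, (if I r ω H = true then 1 else 0)} with hG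
  have hunion : Gᶜ ⊆ ⋃ j ∈ Finset.univ.erase H,
      {ω | ¬ ((∑ r, (if I r ω j = true then 1 else 0) : ℕ) <
          ∑ r, (if I r ω H = true then 1 else 0))} := by
    intro ω hω
    simp only [hG, Set.mem_compl_iff, Set.mem_setOf_eq] at hω
    push_neg at hω
    obtain ⟨j, hj, hlt⟩ := hω
    exact Set.mem_biUnion (Finset.mem_erase.2 ⟨hj, Finset.mem_univ j⟩) (by simpa using hlt)
  have hGc : μ Gᶜ ≤ ENNReal.ofReal (1/(n:ℝ)) := by
    refine le_trans (measure_mono hunion) ?_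
    refine le_trans (measure_biUnion_finset_le _ _) ?_
    have hsum : ∑ j ∈ Finset.univ.erase H,
        μ {ω | ¬ ((∑ r, (if I r ω j = true then 1 else 0) : ℕ) <
            ∑ r, (if I r ω H = true then 1 else 0))} ≤
        ∑ _j ∈ Finset.univ.erase H, ENNReal.ofReal ((24/25 : ℝ)^R) :=
      Finset.sum_le_sum fun j hj => one_competitor H hδ Ω μ I hMeas hIndep hHeavy hLight j
        (Finset.mem_erase.1 hj).1
    refine le_trans hsum ?_
    rw [Finset.sum_const, Finset.card_erase_of_mem (Finset.mem_univ H), Finset.card_univ,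
      Fintype.card_fin, nsmul_eq_mul, ← ENNReal.ofReal_natCast,
      ← ENNReal.ofReal_mul (Nat.cast_nonneg _)]
    exact ENNReal.ofReal_le_ofReal hreal
  have hu : (1:ℝ≥0∞) ≤ μ G + μ Gᶜ := by
    calc (1:ℝ≥0∞) = μ Set.univ := measure_univ.symm
      _ = μ (G ∪ Gᶜ) := by rw [Set.union_compl_self]
      _ ≤ μ G + μ Gᶜ := measure_union_le _ _
  calc ENNReal.ofReal (1 - 1/(n:ℝ)) = 1 - ENNReal.ofReal (1/(n:ℝ)) := by
        rw [ENNReal.ofReal_sub _ (by positivity), ENNReal.ofReal_one]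
    _ ≤ 1 - μ Gᶜ := tsub_le_tsub_left hGc 1
    _ ≤ μ G := tsub_le_iff_right.2 hu
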